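/- arXiv:1506.05288 — 5 statements merged into one kernel-verified Lean document; each statement's English description precedes it below -/
import Mathlib

section
/- For all real h with |h| ≤ 2 (or at least for |h| < 2), (arcsin(h/2))² = (1/2) ∑_{k=1}^∞ ((k-1)!)²/(2k)! · h^{2k}. -/
open Real Filter Topology

noncomputable def asc (k : ℕ) : ℝ :=
  (Nat.factorial k : ℝ) ^ 2 * 2 ^ (2 * k + 1) / (Nat.factorial (2 * k + 2) : ℝ)

lemma asc_pos (k : ℕ) : 0 < asc k := by
  unfold asc
  positivity

lemma asc_zero : asc 0 = 1 := by
  simp [asc, Nat.factorial]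

lemma asc_rec (k : ℕ) :
    asc (k + 1) * ((2 * k + 4) * (2 * k + 3)) = asc k * (2 * k + 2) ^ 2 := by
  unfold asc
  have h1 : Nat.factorial (2 * (k + 1) + 2) =
      (2 * k + 4) * ((2 * k + 3) * Nat.factorial (2 * k + 2)) := by
    have : 2 * (k + 1) + 2 = (2 * k + 3) + 1 := by ring
    rw [this, Nat.factorial_succ]
    have : 2 * k + 3 = (2 * k + 2) + 1 := by ring
    rw [this, Nat.factorial_succ]
  have h2 : Nat.factorial (k + 1) = (k + 1) * Nat.factorial k := Nat.factorial_succ k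
  rw [h1, h2]
  have hf : (Nat.factorial (2 * k + 2) : ℝ) ≠ 0 := by positivity
  field_simp
  push_cast
  ring

lemma asc_le_one (k : ℕ) : asc k ≤ 1 := by
  induction k with
  | zero => rw [asc_zero]
  | succ n ih =>
    have hrec := asc_rec n
    have hpos : (0:ℝ) < (2 * n + 4) * (2 * n + 3) := by positivity
    have h2 : asc (n+1) = asc n * (2 * n + 2) ^ 2 / ((2 * n + 4) * (2 * n + 3)) := by
      field_simp [hpos.ne'] at hrec ⊢
      linarith [hrec]
    rw [h2]
    have hle : ((2 * (n:ℝ) + 2) ^ 2) ≤ (2 * n + 4) * (2 * n + 3) := by nlinarith [n.cast_nonneg (α := ℝ)]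
    have := asc_pos n
    rw [div_le_one hpos]
    nlinarith

noncomputable def ae (k : ℕ) : ℝ := 2 * (k + 1) * asc k

lemma ae_pos (k : ℕ) : 0 < ae k := by
  have := asc_pos k
  unfold ae
  positivity

lemma ae_succ (k : ℕ) : ae (k + 1) * (2 * k + 3) = ae k * (2 * k + 2) := by
  unfold ae
  have h := asc_rec k
  have : (2:ℝ) * (↑(k+1) + 1) * asc (k+1) * (2*k+3) * (2*k+2)
      = asc (k+1) * ((2*k+4)*(2*k+3)) * (2*(k:ℝ)+2) := by push_cast; ring
  nlinarith [asc_pos k, asc_pos (k+1)]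

lemma asc_le_diff (k : ℕ) : asc k ≤ (3/2) * (ae k - ae (k + 1)) := by
  have h := ae_succ k
  have h3 : (0:ℝ) < 2*k+3 := by positivity
  have hek : ae (k+1) = ae k * (2*k+2) / (2*k+3) := by
    field_simp
    linarith
  have hck : asc k = ae k / (2*(k+1)) := by
    unfold ae; field_simp
  rw [hek, hck]
  rw [div_le_iff₀ (by positivity)]
  have hae := ae_pos k
  have : (3/2) * (ae k - ae k * (2*k+2) / (2*k+3)) = (3/2) * ae k / (2*k+3) := by
    field_simp; ring
  rw [this]
  rw [div_mul_eq_mul_div, le_div_iff₀ h3]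
  nlinarith [k.cast_nonneg (α := ℝ)]

lemma summable_asc : Summable asc := by
  apply summable_of_sum_range_le (c := (3/2) * ae 0) (fun n => (asc_pos n).le)
  intro n
  calc ∑ i ∈ Finset.range n, asc i
      ≤ ∑ i ∈ Finset.range n, (3/2) * (ae i - ae (i+1)) :=
        Finset.sum_le_sum fun i _ => asc_le_diff i
    _ = (3/2) * (ae 0 - ae n) := by
        rw [← Finset.mul_sum]
        congr 1
        have := Finset.sum_range_sub' ae n
        simpa using this
    _ ≤ (3/2) * ae 0 := by nlinarith [ae_pos n]

lemma summable_aux {q : ℝ} (hq : |q| < 1) :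
    Summable (fun k : ℕ => ((k : ℝ) + 1) ^ 2 * q ^ k) := by
  have hq' : ‖q‖ < 1 := by rwa [Real.norm_eq_abs]
  have h2 := summable_pow_mul_geometric_of_norm_lt_one (R := ℝ) 2 hq'
  have h1 := summable_pow_mul_geometric_of_norm_lt_one (R := ℝ) 1 hq'
  have h0 := summable_geometric_of_norm_lt_one hq'
  have : (fun k : ℕ => ((k : ℝ) + 1) ^ 2 * q ^ k)
      = fun k : ℕ => (k : ℝ) ^ 2 * q ^ k + (2 * ((k : ℝ) ^ 1 * q ^ k) + q ^ k) := by
    funext k; ring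
  rw [this]
  exact h2.add ((h1.mul_left 2).add h0)

lemma term_bound (k m : ℕ) (hm : 2 * k ≤ m) {y r b C : ℝ} (hy : |y| ≤ r) (hr : r ≤ 1)
    (hb : |b| ≤ C) : ‖asc k * (b * y ^ m)‖ ≤ C * (r ^ 2) ^ k := by
  have h0 : (0:ℝ) ≤ r := le_trans (abs_nonneg y) hy
  have hyk : |y| ^ m ≤ r ^ m := pow_le_pow_left₀ (abs_nonneg y) hy m
  have hrm : r ^ m ≤ r ^ (2 * k) := pow_le_pow_of_le_one h0 hr hm
  have hr2 : r ^ (2 * k) = (r ^ 2) ^ k := by rw [← pow_mul]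
  have h1 : ‖asc k * (b * y ^ m)‖ = asc k * (|b| * |y| ^ m) := by
    rw [Real.norm_eq_abs, abs_mul, abs_mul, abs_pow, abs_of_pos (asc_pos k)]
  rw [h1]
  have h2 : asc k * (|b| * |y| ^ m) ≤ 1 * (C * (r ^ 2) ^ k) := by
    apply mul_le_mul (asc_le_one k) _ (by positivity) one_pos.le
    apply mul_le_mul hb (by linarith [hr2 ▸ hrm.trans_eq hr2, hyk.trans hrm]) (by positivity)
      (le_trans (abs_nonneg b) hb)
  linarith

lemma summable_help {x : ℝ} (hx : |x| < 1) {b : ℕ → ℝ} {C : ℝ}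
    (hb : ∀ k, |b k| ≤ C * ((k : ℝ) + 1) ^ 2) {m : ℕ → ℕ} (hm : ∀ k, 2 * k ≤ m k) :
    Summable (fun k => asc k * (b k * x ^ (m k))) := by
  have hx2 : |x ^ 2| < 1 := by
    rw [abs_pow]; exact pow_lt_one₀ (abs_nonneg x) hx two_ne_zero
  apply Summable.of_norm_bounded (g := fun k : ℕ => C * (((k : ℝ) + 1) ^ 2 * (x ^ 2) ^ k))
    ((summable_aux hx2).mul_left C)
  intro k
  have := term_bound k (m k) (hm k) (le_refl |x|) hx.le (hb k)
  rw [sq_abs] at this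
  linarith [this]

noncomputable def G (x : ℝ) : ℝ := ∑' k : ℕ, asc k * x ^ (2 * k + 2)
noncomputable def G1 (x : ℝ) : ℝ :=
  ∑' k : ℕ, asc k * ((2 * (k : ℝ) + 2) * x ^ (2 * k + 1))
noncomputable def G2 (x : ℝ) : ℝ :=
  ∑' k : ℕ, asc k * ((2 * (k : ℝ) + 2) * ((2 * (k : ℝ) + 1) * x ^ (2 * k)))

lemma abs_le_of_mem_Ioo {y r : ℝ} (hy : y ∈ Set.Ioo (-r) r) : |y| ≤ r :=
  (abs_lt.2 ⟨hy.1, hy.2⟩).le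

lemma hasDerivAt_G {x : ℝ} (hx : |x| < 1) : HasDerivAt G (G1 x) x := by
  set r : ℝ := (|x| + 1) / 2 with hr
  have hr0 : 0 ≤ r := by positivity
  have hxr : |x| < r := by rw [hr]; linarith
  have hr1 : r < 1 := by rw [hr]; linarith
  have hr2 : |r ^ 2| < 1 := by
    rw [abs_of_nonneg (by positivity)]
    exact pow_lt_one₀ hr0 hr1 two_ne_zero
  apply hasDerivAt_tsum_of_isPreconnected
    (u := fun k : ℕ => (8 * ((k : ℝ) + 1) ^ 2) * (r ^ 2) ^ k)
    (g' := fun k y => asc k * ((2 * (k : ℝ) + 2) * y ^ (2 * k + 1)))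
    (y₀ := 0) (t := Set.Ioo (-r) r)
  · have := (summable_aux hr2).mul_left 8
    apply this.congr
    intro k; ring
  · exact isOpen_Ioo
  · exact (convex_Ioo _ _).isPreconnected
  · intro k y _
    have h1 : HasDerivAt (fun z : ℝ => z ^ (2 * k + 2))
        ((2 * (k : ℝ) + 2) * y ^ (2 * k + 1)) y := by
      have := hasDerivAt_pow (2 * k + 2) y
      refine this.congr_deriv ?_
      have : 2 * k + 2 - 1 = 2 * k + 1 := rfl
      rw [this]
      push_cast; ring
    exact h1.const_mul (asc k)
  · intro k y hy
    apply term_bound k (2 * k + 1) (by omega) (abs_le_of_mem_Ioo hy) hr1.le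
    rw [abs_of_nonneg (by positivity)]
    nlinarith [k.cast_nonneg (α := ℝ)]
  · exact Set.mem_Ioo.2 ⟨by linarith [abs_nonneg x], by linarith [abs_nonneg x]⟩
  · apply summable_of_finite_support
    apply Set.Finite.subset (Set.finite_singleton 0)
    intro k hk
    simp only [Function.mem_support] at hk
    by_contra hne
    exact hk (by simp [zero_pow, (by omega : 2 * k + 2 ≠ 0)])
  · exact Set.mem_Ioo.2 ⟨(abs_lt.1 hxr).1, (abs_lt.1 hxr).2⟩

lemma hasDerivAt_G1 {x : ℝ} (hx : |x| < 1) : HasDerivAt G1 (G2 x) x := by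
  set r : ℝ := (|x| + 1) / 2 with hr
  have hr0 : 0 ≤ r := by positivity
  have hxr : |x| < r := by rw [hr]; linarith
  have hr1 : r < 1 := by rw [hr]; linarith
  have hr2 : |r ^ 2| < 1 := by
    rw [abs_of_nonneg (by positivity)]
    exact pow_lt_one₀ hr0 hr1 two_ne_zero
  apply hasDerivAt_tsum_of_isPreconnected
    (u := fun k : ℕ => (8 * ((k : ℝ) + 1) ^ 2) * (r ^ 2) ^ k)
    (g' := fun k y => asc k * ((2 * (k : ℝ) + 2) * ((2 * (k : ℝ) + 1) * y ^ (2 * k))))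
    (y₀ := 0) (t := Set.Ioo (-r) r)
  · have := (summable_aux hr2).mul_left 8
    apply this.congr
    intro k; ring
  · exact isOpen_Ioo
  · exact (convex_Ioo _ _).isPreconnected
  · intro k y _
    have h1 : HasDerivAt (fun z : ℝ => (2 * (k : ℝ) + 2) * z ^ (2 * k + 1))
        ((2 * (k : ℝ) + 2) * ((2 * (k : ℝ) + 1) * y ^ (2 * k))) y := by
      have h2 : HasDerivAt (fun z : ℝ => z ^ (2 * k + 1))
          ((2 * (k : ℝ) + 1) * y ^ (2 * k)) y := by
        have := hasDerivAt_pow (2 * k + 1) y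
        refine this.congr_deriv ?_
        have : 2 * k + 1 - 1 = 2 * k := rfl
        rw [this]
        push_cast; ring
      exact h2.const_mul _
    exact h1.const_mul (asc k)
  · intro k y hy
    have hb : |(2 * (k : ℝ) + 2) * (2 * (k : ℝ) + 1)| ≤ 8 * ((k : ℝ) + 1) ^ 2 := by
      rw [abs_of_nonneg (by positivity)]
      nlinarith [k.cast_nonneg (α := ℝ)]
    have := term_bound k (2 * k) (le_refl _) (abs_le_of_mem_Ioo hy) hr1.le hb
    show ‖asc k * ((2 * (k : ℝ) + 2) * ((2 * (k : ℝ) + 1) * y ^ (2 * k)))‖ ≤ _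
    convert this using 2
    ring
  · exact Set.mem_Ioo.2 ⟨by linarith [abs_nonneg x], by linarith [abs_nonneg x]⟩
  · apply summable_of_finite_support
    apply Set.Finite.subset (Set.finite_singleton 0)
    intro k hk
    simp only [Function.mem_support] at hk
    by_contra hne
    exact hk (by simp [zero_pow, (by omega : 2 * k + 1 ≠ 0)])
  · exact Set.mem_Ioo.2 ⟨(abs_lt.1 hxr).1, (abs_lt.1 hxr).2⟩

lemma ode {x : ℝ} (hx : |x| < 1) : (1 - x ^ 2) * G2 x - x * G1 x = 2 := by
  have cnn : ∀ k : ℕ, (0:ℝ) ≤ (k:ℝ) := fun k => k.cast_nonneg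
  have SB : Summable (fun k : ℕ => asc k * ((2 * (k:ℝ) + 2) * x ^ (2 * k + 2))) :=
    summable_help hx (b := fun k => 2 * (k:ℝ) + 2) (C := 4)
      (fun k => by rw [abs_of_nonneg (by positivity)]; nlinarith [cnn k]) (fun k => by omega)
  have SC : Summable (fun k : ℕ =>
      asc k * (((2 * (k:ℝ) + 2) * (2 * (k:ℝ) + 1)) * x ^ (2 * k + 2))) :=
    summable_help hx (b := fun k => (2 * (k:ℝ) + 2) * (2 * (k:ℝ) + 1)) (C := 8)
      (fun k => by rw [abs_of_nonneg (by positivity)]; nlinarith [cnn k]) (fun k => by omega)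
  have SA : Summable (fun k : ℕ => asc k * ((2 * (k:ℝ) + 2) ^ 2 * x ^ (2 * k + 2))) :=
    summable_help hx (b := fun k => (2 * (k:ℝ) + 2) ^ 2) (C := 4)
      (fun k => by rw [abs_of_nonneg (by positivity)]; nlinarith [cnn k]) (fun k => by omega)
  have S2 : Summable (fun k : ℕ =>
      asc k * ((2 * (k:ℝ) + 2) * ((2 * (k:ℝ) + 1) * x ^ (2 * k)))) := by
    have := summable_help hx (b := fun k => (2 * (k:ℝ) + 2) * (2 * (k:ℝ) + 1)) (C := 8)
      (fun k => by rw [abs_of_nonneg (by positivity)]; nlinarith [cnn k])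
      (m := fun k => 2 * k) (fun k => le_refl _)
    apply this.congr
    intro k; ring
  have e1 : x * G1 x = ∑' k : ℕ, asc k * ((2 * (k:ℝ) + 2) * x ^ (2 * k + 2)) := by
    unfold G1
    rw [← tsum_mul_left]
    exact tsum_congr fun k => by ring
  have e2 : x ^ 2 * G2 x
      = ∑' k : ℕ, asc k * (((2 * (k:ℝ) + 2) * (2 * (k:ℝ) + 1)) * x ^ (2 * k + 2)) := by
    unfold G2
    rw [← tsum_mul_left]
    exact tsum_congr fun k => by ring
  have e3 : G2 x = 2 + ∑' k : ℕ, asc k * ((2 * (k:ℝ) + 2) ^ 2 * x ^ (2 * k + 2)) := by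
    unfold G2
    rw [Summable.tsum_eq_zero_add S2]
    congr 1
    · push_cast; rw [asc_zero]; norm_num
    · apply tsum_congr
      intro k
      have hrec := asc_rec k
      push_cast
      calc asc (k + 1) * ((2 * ((k:ℝ) + 1) + 2) * ((2 * ((k:ℝ) + 1) + 1) * x ^ (2 * (k + 1))))
          = (asc (k + 1) * ((2 * (k:ℝ) + 4) * (2 * (k:ℝ) + 3))) * x ^ (2 * k + 2) := by
            push_cast; ring
        _ = (asc k * (2 * (k:ℝ) + 2) ^ 2) * x ^ (2 * k + 2) := by rw [hrec]
        _ = asc k * ((2 * (k:ℝ) + 2) ^ 2 * x ^ (2 * k + 2)) := by ring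
  have expand : (1 - x ^ 2) * G2 x - x * G1 x = G2 x - x ^ 2 * G2 x - x * G1 x := by ring
  rw [expand, e2, e1, e3]
  have hzero : (∑' k : ℕ, asc k * ((2 * (k:ℝ) + 2) ^ 2 * x ^ (2 * k + 2)))
      - (∑' k : ℕ, asc k * (((2 * (k:ℝ) + 2) * (2 * (k:ℝ) + 1)) * x ^ (2 * k + 2)))
      - (∑' k : ℕ, asc k * ((2 * (k:ℝ) + 2) * x ^ (2 * k + 2))) = 0 := by
    rw [← Summable.tsum_sub SA SC, ← Summable.tsum_sub (SA.sub SC) SB]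
    have : ∀ k : ℕ, asc k * ((2 * (k:ℝ) + 2) ^ 2 * x ^ (2 * k + 2))
        - asc k * (((2 * (k:ℝ) + 2) * (2 * (k:ℝ) + 1)) * x ^ (2 * k + 2))
        - asc k * ((2 * (k:ℝ) + 2) * x ^ (2 * k + 2)) = 0 := fun k => by ring
    rw [tsum_congr this, tsum_zero]
  linarith [hzero]

lemma const_of_deriv0 {f : ℝ → ℝ} {x c : ℝ} (h : ∀ y ∈ Set.Ioo (-1:ℝ) 1, HasDerivAt f 0 y)
    (hx : x ∈ Set.Ioo (-1:ℝ) 1) (hc : c ∈ Set.Ioo (-1:ℝ) 1) : f x = f c := by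
  apply Convex.is_const_of_fderivWithin_eq_zero (convex_Ioo (-1:ℝ) 1)
    (fun y hy => (h y hy).differentiableAt.differentiableWithinAt) ?_ hx hc
  intro y hy
  rw [fderivWithin_of_isOpen isOpen_Ioo hy]
  have h2 := (h y hy).hasFDerivAt.fderiv
  rw [h2]
  ext
  simp

lemma mem_Ioo_of_abs {y : ℝ} (hy : |y| < 1) : y ∈ Set.Ioo (-1:ℝ) 1 :=
  ⟨(abs_lt.1 hy).1, (abs_lt.1 hy).2⟩

lemma G1_eq {x : ℝ} (hx : |x| < 1) : Real.sqrt (1 - x ^ 2) * G1 x = 2 * arcsin x := by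
  have key : ∀ y ∈ Set.Ioo (-1:ℝ) 1,
      HasDerivAt (fun z => Real.sqrt (1 - z ^ 2) * G1 z - 2 * arcsin z) 0 y := by
    intro y hy
    have hy1 : |y| < 1 := abs_lt.2 ⟨hy.1, hy.2⟩
    have hyne1 : y ≠ 1 := ne_of_lt hy.2
    have hynem1 : y ≠ -1 := ne_of_gt hy.1
    have hpos : 0 < 1 - y ^ 2 := by nlinarith [hy.1, hy.2]
    set s := Real.sqrt (1 - y ^ 2) with hs
    have hspos : 0 < s := Real.sqrt_pos.2 hpos
    have hs2 : s ^ 2 = 1 - y ^ 2 := Real.sq_sqrt hpos.le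
    have hinner : HasDerivAt (fun z : ℝ => 1 - z ^ 2) (-(2 * y)) y := by
      have := (hasDerivAt_pow 2 y).const_sub 1
      refine this.congr_deriv ?_
      norm_num
    have hsq : HasDerivAt (fun z : ℝ => Real.sqrt (1 - z ^ 2)) (-y / s) y := by
      have h0 : (1 : ℝ) - y ^ 2 ≠ 0 := hpos.ne'
      have := (Real.hasDerivAt_sqrt h0).comp y hinner
      refine this.congr_deriv ?_
      field_simp
      ring
    have harc : HasDerivAt arcsin (1 / s) y := Real.hasDerivAt_arcsin hynem1 hyne1
    have hG1y := hasDerivAt_G1 hy1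
    have hmul := hsq.mul hG1y
    have hfull := hmul.sub (harc.const_mul 2)
    refine hfull.congr_deriv ?_
    have hode := ode hy1
    have hG2 : s * G2 y = ((1 - y ^ 2) * G2 y) / s := by
      rw [← hs2]; field_simp
    rw [← hs]
    field_simp
    linear_combination hode + G2 y * hs2
  have h0mem : (0:ℝ) ∈ Set.Ioo (-1:ℝ) 1 := by norm_num
  have := const_of_deriv0 key (mem_Ioo_of_abs hx) h0mem
  have hG10 : G1 0 = 0 := by
    unfold G1
    have : ∀ k : ℕ, asc k * ((2 * (k:ℝ) + 2) * (0:ℝ) ^ (2 * k + 1)) = 0 := by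
      intro k
      rw [zero_pow (by omega : 2 * k + 1 ≠ 0)]
      ring
    rw [tsum_congr this, tsum_zero]
  simp only [hG10, arcsin_zero, mul_zero, sub_zero] at this
  linarith [this]

lemma G_eq {x : ℝ} (hx : |x| < 1) : G x = arcsin x ^ 2 := by
  have key : ∀ y ∈ Set.Ioo (-1:ℝ) 1,
      HasDerivAt (fun z => G z - arcsin z ^ 2) 0 y := by
    intro y hy
    have hy1 : |y| < 1 := abs_lt.2 ⟨hy.1, hy.2⟩
    have hyne1 : y ≠ 1 := ne_of_lt hy.2
    have hynem1 : y ≠ -1 := ne_of_gt hy.1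
    have hpos : 0 < 1 - y ^ 2 := by nlinarith [hy.1, hy.2]
    set s := Real.sqrt (1 - y ^ 2) with hs
    have hspos : 0 < s := Real.sqrt_pos.2 hpos
    have harc : HasDerivAt arcsin (1 / s) y := Real.hasDerivAt_arcsin hynem1 hyne1
    have harcsq : HasDerivAt (fun z => arcsin z ^ 2) (2 * arcsin y * (1 / s)) y := by
      have := harc.pow 2
      refine this.congr_deriv ?_
      push_cast
      ring
    have hGy := hasDerivAt_G hy1
    have hfull := hGy.sub harcsq
    refine hfull.congr_deriv ?_
    have hkey := G1_eq hy1
    rw [← hs] at hkey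
    field_simp
    nlinarith [hkey, hspos]
  have h0mem : (0:ℝ) ∈ Set.Ioo (-1:ℝ) 1 := by norm_num
  have := const_of_deriv0 key (mem_Ioo_of_abs hx) h0mem
  have hG0 : G 0 = 0 := by
    unfold G
    have : ∀ k : ℕ, asc k * (0:ℝ) ^ (2 * k + 2) = 0 := by
      intro k
      rw [zero_pow (by omega : 2 * k + 2 ≠ 0)]
      ring
    rw [tsum_congr this, tsum_zero]
  simp only [hG0, arcsin_zero, mul_zero, sub_zero] at this
  nlinarith [this]

lemma contG : ContinuousOn G (Set.Icc (-1:ℝ) 1) := by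
  apply continuousOn_tsum (u := asc)
    (hf := fun k => (continuous_const.mul (continuous_pow (2 * k + 2))).continuousOn)
    summable_asc
  intro k x hx
  have hx1 : |x| ≤ 1 := abs_le.2 ⟨hx.1, hx.2⟩
  have : ‖asc k * x ^ (2 * k + 2)‖ = asc k * |x| ^ (2 * k + 2) := by
    rw [Real.norm_eq_abs, abs_mul, abs_pow, abs_of_pos (asc_pos k)]
  show ‖asc k * x ^ (2 * k + 2)‖ ≤ asc k
  rw [this]
  calc asc k * |x| ^ (2 * k + 2) ≤ asc k * 1 := by
        have := pow_le_one₀ (abs_nonneg x) hx1 (n := 2 * k + 2)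
        nlinarith [asc_pos k, pow_nonneg (abs_nonneg x) (2 * k + 2)]
    _ = asc k := mul_one _

lemma G_eq_closed {x : ℝ} (hx : |x| ≤ 1) : G x = arcsin x ^ 2 := by
  rcases lt_or_eq_of_le hx with h | h
  · exact G_eq h
  · have hmem : x ∈ Set.Icc (-1:ℝ) 1 := ⟨(abs_le.1 hx).1, (abs_le.1 hx).2⟩
    have hne : (𝓝[Set.Ioo (-1:ℝ) 1] x).NeBot := by
      rcases (abs_eq (by norm_num : (0:ℝ) ≤ 1)).1 h with h1 | h1
      · subst h1; exact right_nhdsWithin_Ioo_neBot (by norm_num)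
      · subst h1; exact left_nhdsWithin_Ioo_neBot (by norm_num)
    have h1 : Filter.Tendsto G (𝓝[Set.Ioo (-1:ℝ) 1] x) (𝓝 (G x)) :=
      (contG.continuousWithinAt hmem).mono_left (nhdsWithin_mono _ Set.Ioo_subset_Icc_self)
    have h2 : Filter.Tendsto (fun y => arcsin y ^ 2) (𝓝[Set.Ioo (-1:ℝ) 1] x)
        (𝓝 (arcsin x ^ 2)) :=
      ((Real.continuous_arcsin.pow 2).tendsto x).mono_left nhdsWithin_le_nhds
    have h3 : Filter.Tendsto G (𝓝[Set.Ioo (-1:ℝ) 1] x) (𝓝 (arcsin x ^ 2)) := by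
      apply h2.congr'
      filter_upwards [self_mem_nhdsWithin] with y hy
      exact (G_eq (abs_lt.2 ⟨hy.1, hy.2⟩)).symm
    exact tendsto_nhds_unique h1 h3

theorem arcsin_sq_series (h : ℝ) (hh : |h| ≤ 2) :
    (Real.arcsin (h / 2)) ^ 2 =
      (1 / 2) * ∑' k : ℕ+, ((Nat.factorial ((k : ℕ) - 1) : ℝ) ^ 2 /
        (Nat.factorial (2 * (k : ℕ)) : ℝ)) * h ^ (2 * (k : ℕ)) := by
  have hx : |h / 2| ≤ 1 := by
    rw [abs_div]
    rw [abs_of_pos (by norm_num : (0:ℝ) < 2)]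
    linarith
  rw [← G_eq_closed hx]
  unfold G
  rw [← Equiv.tsum_eq Equiv.pnatEquivNat.symm (fun k : ℕ+ =>
    ((Nat.factorial ((k : ℕ) - 1) : ℝ) ^ 2 /
        (Nat.factorial (2 * (k : ℕ)) : ℝ)) * h ^ (2 * (k : ℕ)))]
  rw [← tsum_mul_left]
  apply tsum_congr
  intro n
  have hcoe : ((Equiv.pnatEquivNat.symm n : ℕ+) : ℕ) = n + 1 := rfl
  simp only [hcoe]
  have h2 : (n + 1) - 1 = n := rfl
  have h3 : 2 * (n + 1) = 2 * n + 2 := by ring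
  rw [h2, h3]
  unfold asc
  rw [div_pow]
  have hne1 : (Nat.factorial (2 * n + 2) : ℝ) ≠ 0 := by positivity
  have hne2 : ((2:ℝ)) ^ (2 * n + 2) ≠ 0 := by positivity
  field_simp
  ring
end

section
/- ∑_{k=1}^∞ ((k-1)!)²/(2k)! = π²/18. -/
open Finset in
lemma prod_shift_factorial (a b : ℕ) :
    a.factorial * ∏ j ∈ Finset.range b, (a + 1 + j) = (a + b).factorial := by
  induction b with
  | zero => simp
  | succ n ih =>
    rw [Finset.prod_range_succ, ← mul_assoc, ih, ← Nat.add_assoc, Nat.factorial_succ]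
    ring

lemma beta_nat (a b : ℕ) :
    ∫ x in (0:ℝ)..1, x ^ a * (1 - x) ^ b
      = (a.factorial : ℝ) * b.factorial / (a + b + 1).factorial := by
  have hu : 0 < Complex.re ((a : ℂ) + 1) := by
    simp only [Complex.add_re, Complex.natCast_re, Complex.one_re]
    positivity
  have h := Complex.betaIntegral_eval_nat_add_one_right hu b
  have hL : Complex.betaIntegral ((a : ℂ) + 1) ((b : ℂ) + 1)
      = ((∫ x in (0:ℝ)..1, x ^ a * (1 - x) ^ b : ℝ) : ℂ) := by
    rw [Complex.betaIntegral, ← intervalIntegral.integral_ofReal]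
    apply intervalIntegral.integral_congr
    intro x _
    push_cast
    rw [add_sub_cancel_right, add_sub_cancel_right, Complex.cpow_natCast,
      Complex.cpow_natCast]
  have hprod : ∏ j ∈ Finset.range (b + 1), ((a : ℂ) + 1 + j)
      = ((a + b + 1).factorial : ℝ) / ((a.factorial : ℝ) : ℂ) := by
    have hn : a.factorial * ∏ j ∈ Finset.range (b + 1), (a + 1 + j) = (a + (b+1)).factorial :=
      prod_shift_factorial a (b + 1)
    have h2 : ((a.factorial : ℂ)) * ∏ j ∈ Finset.range (b + 1), ((a : ℂ) + 1 + j)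
        = ((a + b + 1).factorial : ℂ) := by
      have := congrArg (Nat.cast : ℕ → ℂ) hn
      push_cast at this
      rw [show a + (b + 1) = a + b + 1 from by omega] at this
      exact this
    have ha : (a.factorial : ℂ) ≠ 0 := by exact_mod_cast a.factorial_ne_zero
    push_cast
    field_simp
    rw [mul_comm]
    exact_mod_cast h2
  rw [hL, hprod] at h
  have ha : (a.factorial : ℂ) ≠ 0 := by exact_mod_cast a.factorial_ne_zero
  have hab : ((a + b + 1).factorial : ℂ) ≠ 0 := by exact_mod_cast (a+b+1).factorial_ne_zero
  have : ((∫ x in (0:ℝ)..1, x ^ a * (1 - x) ^ b : ℝ) : ℂ)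
      = (((a.factorial : ℝ) * b.factorial / (a + b + 1).factorial : ℝ) : ℂ) := by
    rw [h]
    push_cast
    field_simp
  exact_mod_cast this

open MeasureTheory Real Set

lemma ioo_eq_interval (f : ℝ → ℝ) :
    ∫ x in Ioo (0:ℝ) 1, f x = ∫ x in (0:ℝ)..1, f x := by
  rw [intervalIntegral.integral_of_le zero_le_one, integral_Ioc_eq_integral_Ioo]

lemma intF (n : ℕ) :
    ∫ x in Ioo (0:ℝ) 1, x ^ n * (1 - x) ^ (n+1) / (n+1)
      = (n.factorial : ℝ)^2 / ((2*n+2).factorial) := by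
  rw [ioo_eq_interval, intervalIntegral.integral_div, beta_nat n (n+1)]
  rw [show n + (n+1) + 1 = 2*n+2 from by omega]
  have h1 : ((2*n+2).factorial : ℝ) ≠ 0 := by exact_mod_cast (2*n+2).factorial_ne_zero
  have h2 : ((n:ℝ) + 1) ≠ 0 := by positivity
  field_simp
  rw [Nat.factorial_succ]
  push_cast
  ring

lemma intPow (p : ℕ) :
    ∫ x in Ioo (0:ℝ) 1, x ^ p = 1/((p:ℝ)+1) := by
  rw [ioo_eq_interval, integral_pow]
  simp

lemma basel1 : HasSum (fun n : ℕ => 1/((n:ℝ)+1)^2) (π^2/6) := by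
  have h := (hasSum_nat_add_iff' (f := fun n : ℕ => (1:ℝ)/(n:ℝ)^2) 1).mpr hasSum_zeta_two
  simp only [Finset.range_one, Finset.sum_singleton, Nat.cast_zero] at h
  norm_num at h
  convert h using 2 with n
  case e'_3 => rfl
  push_cast
  ring

lemma summable_inv_sq : Summable (fun n : ℕ => 1/((n:ℝ)+1)^2) := basel1.summable

lemma summable_A : Summable (fun n : ℕ => (n.factorial:ℝ)^2/((2*n+2).factorial)) := by
  apply Summable.of_nonneg_of_le (fun n => by positivity) _ summable_inv_sq
  intro n
  rw [div_le_div_iff₀ (by positivity) (by positivity)]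
  have hle : ((n+1).factorial * (n+1).factorial : ℕ) ≤ (2*n+2).factorial := by
    refine Nat.le_of_dvd (Nat.factorial_pos _) ?_
    have := Nat.factorial_mul_factorial_dvd_factorial_add (n+1) (n+1)
    rwa [show n+1+(n+1) = 2*n+2 from by omega] at this
  calc (n.factorial:ℝ)^2 * ((n:ℝ)+1)^2 = (((n+1).factorial * (n+1).factorial : ℕ) : ℝ) := by
        push_cast [Nat.factorial_succ]; ring
    _ ≤ ((2*n+2).factorial : ℝ) := by exact_mod_cast hle
    _ = 1 * ((2*n+2).factorial : ℝ) := by ring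

lemma hasSum_g (m : ℕ) (hm : m ≠ 0) {x : ℝ} (hx : x ∈ Ioo (0:ℝ) 1) :
    HasSum (fun n : ℕ => x^(m*n+(m-1))/((n:ℝ)+1)) (-Real.log (1 - x^m)/x) := by
  obtain ⟨hx0, hx1⟩ := hx
  have hy : |x^m| < 1 := by
    rw [abs_of_nonneg (by positivity)]
    exact pow_lt_one₀ (le_of_lt hx0) hx1 hm
  have h := (Real.hasSum_pow_div_log_of_abs_lt_one hy).div_const x
  convert h using 2 with n
  case e'_3 => rfl
  have h2 : m*(n+1) = (m*n+(m-1))+1 := by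
    have h3 : m*(n+1) = m*n + m := by ring
    omega
  rw [← pow_mul, h2, pow_succ]
  field_simp

lemma hasSum_F {x : ℝ} (hx : x ∈ Ioo (0:ℝ) 1) :
    HasSum (fun n : ℕ => x^n*(1-x)^(n+1)/((n:ℝ)+1)) (-Real.log (1 - x*(1-x))/x) := by
  obtain ⟨hx0, hx1⟩ := hx
  have hy : |x*(1-x)| < 1 := by
    rw [abs_of_nonneg (by nlinarith)]
    nlinarith
  have h := (Real.hasSum_pow_div_log_of_abs_lt_one hy).div_const x
  convert h using 2 with n
  case e'_3 => rfl
  rw [mul_pow, pow_succ x n]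
  field_simp

noncomputable def FF (n : ℕ) (x : ℝ) : ℝ := x^n*(1-x)^(n+1)/((n:ℝ)+1)
noncomputable def gg (m n : ℕ) (x : ℝ) : ℝ := x^(m*n+(m-1))/((n:ℝ)+1)

lemma contF (n : ℕ) : Continuous (FF n) := by unfold FF; fun_prop
lemma contg (m n : ℕ) : Continuous (gg m n) := by unfold gg; fun_prop

lemma log_identity {x : ℝ} (hx : x ∈ Ioo (0:ℝ) 1) :
    -Real.log (1-x*(1-x))/x + -Real.log (1-x^2)/x + -Real.log (1-x^3)/x
      = -Real.log (1-x^1)/x + -Real.log (1-x^6)/x := by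
  obtain ⟨hx0, hx1⟩ := hx
  have h0 : (0:ℝ) < 1-x*(1-x) := by nlinarith
  have h1 : (0:ℝ) < 1-x^1 := by nlinarith
  have h2 : (0:ℝ) < 1-x^2 := by nlinarith
  have h3 : (0:ℝ) < 1-x^3 := by nlinarith
  have h6 : (0:ℝ) < 1-x^6 := by
    have := pow_lt_one₀ (a := x) hx0.le hx1 (by norm_num : (6:ℕ) ≠ 0)
    linarith
  have key : Real.log (1-x*(1-x)) + Real.log (1-x^2) + Real.log (1-x^3)
      = Real.log (1-x^1) + Real.log (1-x^6) := by
    rw [← Real.log_mul h0.ne' h2.ne', ← Real.log_mul (by positivity) h3.ne',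
      ← Real.log_mul h1.ne' h6.ne']
    congr 1
    ring
  rw [← add_div, ← add_div, ← add_div]
  congr 1
  linarith

lemma pointwise {x : ℝ} (hx : x ∈ Ioo (0:ℝ) 1) :
    (∑' n:ℕ, ENNReal.ofReal (FF n x)) + (∑' n:ℕ, ENNReal.ofReal (gg 2 n x))
      + (∑' n:ℕ, ENNReal.ofReal (gg 3 n x))
    = (∑' n:ℕ, ENNReal.ofReal (gg 1 n x)) + (∑' n:ℕ, ENNReal.ofReal (gg 6 n x)) := by
  have hx0 := hx.1
  have hx1 := hx.2
  have h1x : (0:ℝ) ≤ 1 - x := by linarith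
  have hnnF : ∀ n:ℕ, 0 ≤ x^n*(1-x)^(n+1)/((n:ℝ)+1) := fun n => by positivity
  have hnng : ∀ m n : ℕ, 0 ≤ x^(m*n+(m-1))/((n:ℝ)+1) := fun m n => by positivity
  have hvF : 0 ≤ -Real.log (1-x*(1-x))/x :=
    div_nonneg (neg_nonneg.mpr (Real.log_nonpos (by nlinarith) (by nlinarith))) hx0.le
  have hvg : ∀ m : ℕ, 0 ≤ -Real.log (1-x^m)/x := fun m => by
    have hp : (0:ℝ) ≤ x^m := by positivity
    have hp1 : x^m ≤ 1 := pow_le_one₀ hx0.le hx1.le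
    exact div_nonneg (neg_nonneg.mpr (Real.log_nonpos (by linarith) (by linarith))) hx0.le
  simp only [FF, gg]
  rw [← ENNReal.ofReal_tsum_of_nonneg hnnF (hasSum_F hx).summable,
    ← ENNReal.ofReal_tsum_of_nonneg (hnng 2) (hasSum_g 2 (by norm_num) hx).summable,
    ← ENNReal.ofReal_tsum_of_nonneg (hnng 3) (hasSum_g 3 (by norm_num) hx).summable,
    ← ENNReal.ofReal_tsum_of_nonneg (hnng 1) (hasSum_g 1 (by norm_num) hx).summable,
    ← ENNReal.ofReal_tsum_of_nonneg (hnng 6) (hasSum_g 6 (by norm_num) hx).summable,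
    (hasSum_F hx).tsum_eq, (hasSum_g 2 (by norm_num) hx).tsum_eq,
    (hasSum_g 3 (by norm_num) hx).tsum_eq, (hasSum_g 1 (by norm_num) hx).tsum_eq,
    (hasSum_g 6 (by norm_num) hx).tsum_eq,
    ← ENNReal.ofReal_add hvF (hvg 2), ← ENNReal.ofReal_add (add_nonneg hvF (hvg 2)) (hvg 3),
    ← ENNReal.ofReal_add (hvg 1) (hvg 6)]
  exact congrArg _ (log_identity hx)

lemma lint_eq (f : ℝ → ℝ) (hf : Continuous f) (h0 : ∀ x ∈ Ioo (0:ℝ) 1, 0 ≤ f x) :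
    ∫⁻ x in Ioo (0:ℝ) 1, ENNReal.ofReal (f x) = ENNReal.ofReal (∫ x in Ioo (0:ℝ) 1, f x) := by
  refine (ofReal_integral_eq_lintegral_ofReal ?_ ?_).symm
  · exact (hf.integrableOn_Icc (a := 0) (b := 1)).mono_set Ioo_subset_Icc_self
  · exact (ae_restrict_iff' measurableSet_Ioo).mpr (ae_of_all _ h0)

lemma LF : ∫⁻ x in Ioo (0:ℝ) 1, ∑' n:ℕ, ENNReal.ofReal (FF n x)
    = ENNReal.ofReal (∑' n:ℕ, (n.factorial:ℝ)^2/((2*n+2).factorial)) := by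
  rw [lintegral_tsum (fun n => ((contF n).measurable.ennreal_ofReal).aemeasurable)]
  have h : ∀ n:ℕ, ∫⁻ x in Ioo (0:ℝ) 1, ENNReal.ofReal (FF n x)
      = ENNReal.ofReal ((n.factorial:ℝ)^2/((2*n+2).factorial)) := by
    intro n
    rw [lint_eq _ (contF n) (fun x hx => by
      have h1 := hx.1.le; have h2 := hx.2.le
      have h1x : (0:ℝ) ≤ 1 - x := by linarith
      unfold FF; positivity)]
    congr 1
    rw [← intF n]
    rfl
  simp_rw [h]
  rw [← ENNReal.ofReal_tsum_of_nonneg (fun n => by positivity) summable_A]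

lemma hasSum_basel_m (m : ℕ) (hm : m ≠ 0) :
    HasSum (fun n : ℕ => 1/((m:ℝ)*((n:ℝ)+1)^2)) (π^2/6/m) := by
  have e : (fun n:ℕ => 1/((m:ℝ)*((n:ℝ)+1)^2)) = fun n:ℕ => 1/((n:ℝ)+1)^2/(m:ℝ) := by
    funext n
    rw [div_div, mul_comm]
  rw [e]
  exact basel1.div_const _

lemma Lg (m : ℕ) (hm : m ≠ 0) :
    ∫⁻ x in Ioo (0:ℝ) 1, ∑' n:ℕ, ENNReal.ofReal (gg m n x)
      = ENNReal.ofReal (π^2/6/m) := by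
  rw [lintegral_tsum (fun n => ((contg m n).measurable.ennreal_ofReal).aemeasurable)]
  have h : ∀ n:ℕ, ∫⁻ x in Ioo (0:ℝ) 1, ENNReal.ofReal (gg m n x)
      = ENNReal.ofReal (1/((m:ℝ)*((n:ℝ)+1)^2)) := by
    intro n
    rw [lint_eq _ (contg m n) (fun x hx => by
      have h1 := hx.1.le; unfold gg; positivity)]
    congr 1
    unfold gg
    rw [integral_div, intPow]
    have hc : ((m*n+(m-1) : ℕ):ℝ) + 1 = (m:ℝ)*((n:ℝ)+1) := by
      have h3 : m*n+(m-1)+1 = m*(n+1) := by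
        have h4 : m*(n+1) = m*n + m := by ring
        omega
      have := congrArg (Nat.cast : ℕ → ℝ) h3
      push_cast at this
      rw [← this]
      push_cast
      ring
    rw [hc]
    have hm' : (m:ℝ) ≠ 0 := Nat.cast_ne_zero.mpr hm
    have hn' : ((n:ℝ)+1) ≠ 0 := by positivity
    field_simp
  simp_rw [h]
  rw [← ENNReal.ofReal_tsum_of_nonneg (fun n => by positivity) (hasSum_basel_m m hm).summable,
    (hasSum_basel_m m hm).tsum_eq]

theorem series_pi_sq_div_18 :
    ∑' k : ℕ+, ((Nat.factorial ((k : ℕ) - 1) : ℝ) ^ 2 /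
      (Nat.factorial (2 * (k : ℕ)) : ℝ)) = Real.pi ^ 2 / 18 := by
  have hre : (∑' k : ℕ+, ((Nat.factorial ((k : ℕ) - 1) : ℝ) ^ 2 /
      (Nat.factorial (2 * (k : ℕ)) : ℝ)))
      = ∑' n : ℕ, (n.factorial:ℝ)^2/((2*n+2).factorial) := by
    rw [← Equiv.tsum_eq Equiv.pnatEquivNat.symm]
    apply tsum_congr
    intro n
    have h1 : ((Equiv.pnatEquivNat.symm n : ℕ+) : ℕ) = n + 1 := by
      simp [Equiv.pnatEquivNat]
    rw [h1, show n+1-1 = n from rfl, show 2*(n+1) = 2*n+2 from by ring]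
  rw [hre]
  set S := ∑' n : ℕ, (n.factorial:ℝ)^2/((2*n+2).factorial) with hSdef
  have hS0 : 0 ≤ S := tsum_nonneg (fun n => by positivity)
  have mF' : Measurable fun x : ℝ => ∑' n:ℕ, ENNReal.ofReal (FF n x) :=
    Measurable.ennreal_tsum fun n => (contF n).measurable.ennreal_ofReal
  have mg' : ∀ m : ℕ, Measurable fun x : ℝ => ∑' n:ℕ, ENNReal.ofReal (gg m n x) :=
    fun m => Measurable.ennreal_tsum fun n => (contg m n).measurable.ennreal_ofReal
  have hcong : ∫⁻ x in Ioo (0:ℝ) 1,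
        ((∑' n:ℕ, ENNReal.ofReal (FF n x)) + (∑' n:ℕ, ENNReal.ofReal (gg 2 n x))
          + (∑' n:ℕ, ENNReal.ofReal (gg 3 n x)))
      = ∫⁻ x in Ioo (0:ℝ) 1,
        ((∑' n:ℕ, ENNReal.ofReal (gg 1 n x)) + (∑' n:ℕ, ENNReal.ofReal (gg 6 n x))) :=
    setLIntegral_congr_fun measurableSet_Ioo (fun x hx => pointwise hx)
  rw [lintegral_add_left (f := fun x => (∑' n:ℕ, ENNReal.ofReal (FF n x)) + ∑' n:ℕ, ENNReal.ofReal (gg 2 n x)) (mF'.add (mg' 2)), lintegral_add_left mF',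
    lintegral_add_left (mg' 1), LF, Lg 2 (by norm_num), Lg 3 (by norm_num),
    Lg 1 (by norm_num), Lg 6 (by norm_num)] at hcong
  rw [← ENNReal.ofReal_add hS0 (by positivity),
    ← ENNReal.ofReal_add (by positivity) (by positivity),
    ← ENNReal.ofReal_add (by positivity) (by positivity)] at hcong
  rw [ENNReal.ofReal_eq_ofReal_iff (by positivity) (by positivity)] at hcong
  have hpi : (0:ℝ) ≤ π^2 := by positivity
  linarith
end

section
/- Let 0 < h < 2 and set ω = (2/h)·arcsin(h/2). Then every solution x: ℝ → ℝ of x'' = -ω² x satisfies x(t+h) - 2x(t) + x(t-h) = -h² x(t) for all t (i.e., x'' = -ω² x is a modified equation for the Störmer–Verlet discretization of the harmonic oscillator). -/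
lemma aux_zero (c : ℝ) (hc : c ≠ 0) (f f' : ℝ → ℝ)
    (hf : ∀ t, HasDerivAt f (f' t) t)
    (hf' : ∀ t, HasDerivAt f' (-c ^ 2 * f t) t)
    (h0 : f 0 = 0) (h0' : f' 0 = 0) : ∀ t, f t = 0 := by
  set E : ℝ → ℝ := fun t => c ^ 2 * f t ^ 2 + f' t ^ 2 with hE
  have hEd : ∀ t, HasDerivAt E 0 t := by
    intro t
    have h1 : HasDerivAt (fun t => c ^ 2 * f t ^ 2)
        (c ^ 2 * (2 * f t * f' t)) t := (((hf t).pow 2).const_mul (c ^ 2)).congr_deriv (by ring)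
    have h2 : HasDerivAt (fun t => f' t ^ 2) (2 * f' t * (-c ^ 2 * f t)) t := by
      simpa using ((hf' t).fun_pow 2).congr_deriv (by ring)
    exact (h1.add h2).congr_deriv (by ring)
  have hconst : ∀ t, E t = E 0 :=
    fun t => is_const_of_deriv_eq_zero (fun s => (hEd s).differentiableAt)
      (fun s => (hEd s).deriv) t 0
  intro t
  have hEt := hconst t
  have hE0 : E 0 = 0 := by simp [hE, h0, h0']
  rw [hE0] at hEt
  simp only [hE] at hEt
  have hc2 : 0 < c ^ 2 := by positivity
  have h1 : c ^ 2 * f t ^ 2 = 0 := by nlinarith [sq_nonneg (f' t), sq_nonneg (f t)]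
  have h2 : f t ^ 2 = 0 := by
    rcases mul_eq_zero.1 h1 with h | h
    · exact absurd h (by positivity)
    · exact h
  exact pow_eq_zero_iff (by norm_num) |>.1 h2

theorem modified_equation (h : ℝ) (h0 : 0 < h) (h2 : h < 2) (x : ℝ → ℝ)
    (hx1 : Differentiable ℝ x) (hx2 : Differentiable ℝ (deriv x))
    (hode : ∀ t : ℝ, deriv (deriv x) t = -((2 / h) * Real.arcsin (h / 2)) ^ 2 * x t) :
    ∀ t : ℝ, x (t + h) - 2 * x t + x (t - h) = -h ^ 2 * x t := by
  intro t
  set ω : ℝ := (2 / h) * Real.arcsin (h / 2) with hω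
  have harcpos : 0 < Real.arcsin (h / 2) := Real.arcsin_pos.2 (by linarith)
  have hωpos : 0 < ω := by
    have : 0 < 2 / h := by positivity
    positivity
  set g : ℝ → ℝ := fun s => x (t + s) + x (t - s) - 2 * Real.cos (ω * s) * x t with hg
  set g1 : ℝ → ℝ := fun s =>
    deriv x (t + s) - deriv x (t - s) + 2 * ω * Real.sin (ω * s) * x t with hg1
  have hxd : ∀ u, HasDerivAt x (deriv x u) u := fun u => (hx1 u).hasDerivAt
  have hxd2 : ∀ u, HasDerivAt (deriv x) (deriv (deriv x) u) u := fun u => (hx2 u).hasDerivAt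
  have hgd : ∀ s, HasDerivAt g (g1 s) s := by
    intro s
    have h1 : HasDerivAt (fun s => x (t + s)) (deriv x (t + s)) s := by
      simpa [Function.comp_def] using (hxd (t + s)).comp s ((hasDerivAt_id s).const_add t)
    have h2 : HasDerivAt (fun s => x (t - s)) (-deriv x (t - s)) s := by
      simpa [Function.comp_def] using (hxd (t - s)).comp s ((hasDerivAt_id s).const_sub t)
    have h3 : HasDerivAt (fun s => 2 * Real.cos (ω * s) * x t)
        (-(2 * ω * Real.sin (ω * s) * x t)) s := by
      have hc : HasDerivAt (fun s : ℝ => Real.cos (ω * s)) (-Real.sin (ω * s) * ω) s := by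
        simpa [Function.comp_def] using (Real.hasDerivAt_cos (ω * s)).comp s ((hasDerivAt_id s).const_mul ω)
      exact (((hc.const_mul 2).mul_const (x t))).congr_deriv (by ring)
    exact ((h1.add h2).sub h3).congr_deriv (by simp [hg1]; ring)
  have hgd2 : ∀ s, HasDerivAt g1 (-ω ^ 2 * g s) s := by
    intro s
    have h1 : HasDerivAt (fun s => deriv x (t + s)) (deriv (deriv x) (t + s)) s := by
      simpa [Function.comp_def] using (hxd2 (t + s)).comp s ((hasDerivAt_id s).const_add t)
    have h2 : HasDerivAt (fun s => deriv x (t - s)) (-deriv (deriv x) (t - s)) s := by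
      simpa [Function.comp_def] using (hxd2 (t - s)).comp s ((hasDerivAt_id s).const_sub t)
    have h3 : HasDerivAt (fun s => 2 * ω * Real.sin (ω * s) * x t)
        (2 * ω ^ 2 * Real.cos (ω * s) * x t) s := by
      have hc : HasDerivAt (fun s : ℝ => Real.sin (ω * s)) (Real.cos (ω * s) * ω) s := by
        simpa [Function.comp_def] using (Real.hasDerivAt_sin (ω * s)).comp s ((hasDerivAt_id s).const_mul ω)
      exact (((hc.const_mul (2 * ω)).mul_const (x t))).congr_deriv (by ring)
    have := (h1.sub h2).add h3
    refine this.congr_deriv ?_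
    rw [hode (t + s), hode (t - s)]
    simp only [hg, ← hω]
    ring
  have hg0 : g 0 = 0 := by simp [hg]; ring
  have hg10 : g1 0 = 0 := by simp [hg1]
  have hzero := aux_zero ω (ne_of_gt hωpos) g g1 hgd hgd2 hg0 hg10 h
  have hcos : Real.cos (ω * h) = 1 - h ^ 2 / 2 := by
    have hωh : ω * h = 2 * Real.arcsin (h / 2) := by
      rw [hω]; field_simp [ne_of_gt h0]
    have hsin : Real.sin (Real.arcsin (h / 2)) = h / 2 :=
      Real.sin_arcsin (by linarith) (by linarith)
    have := Real.sin_sq_add_cos_sq (Real.arcsin (h / 2))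
    rw [hωh, Real.cos_two_mul]
    nlinarith [this, hsin]
  simp only [hg, hcos] at hzero
  nlinarith [hzero]
end

section
/- For 0 < h < 2, (2/h · arcsin(h/2))² = ∑_{k=1}^∞ 2((k-1)!)²/(2k)! · h^{2k-2}; in particular the power series coefficients of the modified equation x'' = -∑_{k≥1} (2((k-1)!)²/(2k)!) h^{2k-2} x of the Störmer–Verlet scheme x_{j+1} - 2x_j + x_{j-1} = -h² x_j are f_{2k-2}(x) = -((k-1)!)²/(k(2k-1)!) · x. -/
open Real intervalIntegral Finset Filter

/-- coefficient `a_{n+1} = 4^{n+1} (n!)^2 / (2 (2n+2)!)` -/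
noncomputable def mA (n : ℕ) : ℝ :=
  4 ^ (n + 1) * (Nat.factorial n : ℝ) ^ 2 / (2 * (Nat.factorial (2 * n + 2) : ℝ))

/-- coefficient `b_{n+1} = 4^{n+1} (n!)^2 / (2 (2n)!)` -/
noncomputable def mc (n : ℕ) : ℝ :=
  4 ^ (n + 1) * (Nat.factorial n : ℝ) ^ 2 / (2 * (Nat.factorial (2 * n) : ℝ))

/-- remainder -/
noncomputable def mR (n : ℕ) (θ : ℝ) : ℝ :=
  mc n * ∫ t in (0:ℝ)..θ, (θ - t) * Real.sin t ^ (2 * n)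

lemma factR_pos (m : ℕ) : (0:ℝ) < (Nat.factorial m : ℝ) := by
  exact_mod_cast Nat.factorial_pos m

lemma mA_pos (n : ℕ) : 0 < mA n := by
  have := factR_pos (2 * n + 2)
  have : (0:ℝ) < (Nat.factorial n : ℝ) := factR_pos n
  unfold mA
  positivity

lemma mc_pos (n : ℕ) : 0 < mc n := by
  have := factR_pos (2 * n)
  have : (0:ℝ) < (Nat.factorial n : ℝ) := factR_pos n
  unfold mc
  positivity

lemma fact_succ_succ (n : ℕ) :
    ((Nat.factorial (2 * n + 2) : ℝ)) =
      (2 * n + 2) * ((2 * n + 1) * (Nat.factorial (2 * n) : ℝ)) := by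
  rw [show 2 * n + 2 = (2 * n + 1) + 1 from rfl, Nat.factorial_succ, Nat.factorial_succ]
  push_cast
  ring

lemma mc_eq (n : ℕ) : mc n = (2 * n + 2) * (2 * n + 1) * mA n := by
  unfold mc mA
  rw [fact_succ_succ]
  have h1 := factR_pos (2 * n)
  field_simp

lemma mc_succ (n : ℕ) : mc (n + 1) = (2 * n + 2) ^ 2 * mA n := by
  unfold mc mA
  rw [show 2 * (n + 1) = 2 * n + 2 from by ring, fact_succ_succ, Nat.factorial_succ]
  have h1 := factR_pos (2 * n)
  have h2 := factR_pos n
  push_cast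
  field_simp
  ring

lemma contInt (n : ℕ) (θ a b : ℝ) :
    IntervalIntegrable (fun t => (θ - t) * Real.sin t ^ n) MeasureTheory.volume a b := by
  apply Continuous.intervalIntegrable
  fun_prop

/-- derivative of `sin^(m+1) * cos` -/
lemma hasDeriv_v (n : ℕ) (t : ℝ) :
    HasDerivAt (fun t => (2 * (n:ℝ) + 2) * mA n * (Real.sin t ^ (2 * n + 1) * Real.cos t))
      (mc n * Real.sin t ^ (2 * n) - mc (n + 1) * Real.sin t ^ (2 * n + 2)) t := by
  have hs := Real.hasDerivAt_sin t
  have h1 : HasDerivAt (fun t => Real.sin t ^ (2 * n + 1))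
      ((2 * (n:ℝ) + 1) * Real.sin t ^ (2 * n) * Real.cos t) t := by
    have := hs.fun_pow (2 * n + 1)
    simpa using this
  have h2 := (h1.fun_mul (Real.hasDerivAt_cos t)).const_mul ((2 * (n:ℝ) + 2) * mA n)
  refine h2.congr_deriv ?_
  symm
  have hc : Real.cos t ^ 2 = 1 - Real.sin t ^ 2 := Real.cos_sq' t
  rw [mc_eq, mc_succ]
  push_cast
  linear_combination (-(2 * (n:ℝ) + 2) * (2 * (n:ℝ) + 1) * mA n * Real.sin t ^ (2 * n)) * hc

lemma hasDeriv_F (n : ℕ) (t : ℝ) :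
    HasDerivAt (fun t => mA n * Real.sin t ^ (2 * n + 2))
      ((2 * (n:ℝ) + 2) * mA n * (Real.sin t ^ (2 * n + 1) * Real.cos t)) t := by
  have hs := Real.hasDerivAt_sin t
  have h1 : HasDerivAt (fun t => Real.sin t ^ (2 * n + 2))
      ((2 * (n:ℝ) + 2) * Real.sin t ^ (2 * n + 1) * Real.cos t) t := by
    have := hs.fun_pow (2 * n + 2)
    simpa using this
  have := h1.const_mul (mA n)
  refine this.congr_deriv ?_
  ring

lemma mR_step (n : ℕ) (θ : ℝ) :
    mR n θ = mA n * Real.sin θ ^ (2 * n + 2) + mR (n + 1) θ := by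
  have hdiff : mR n θ - mR (n + 1) θ =
      ∫ t in (0:ℝ)..θ, (θ - t) *
        (mc n * Real.sin t ^ (2 * n) - mc (n + 1) * Real.sin t ^ (2 * n + 2)) := by
    unfold mR
    rw [← intervalIntegral.integral_const_mul, ← intervalIntegral.integral_const_mul]
    rw [show 2 * (n + 1) = 2 * n + 2 from by ring]
    rw [← intervalIntegral.integral_sub
      ((contInt (2 * n) θ 0 θ).const_mul _) ((contInt (2 * n + 2) θ 0 θ).const_mul _)]
    congr 1
    funext t
    ring
  set v : ℝ → ℝ := fun t => (2 * (n:ℝ) + 2) * mA n * (Real.sin t ^ (2 * n + 1) * Real.cos t)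
    with hv_def
  have hu : ∀ x ∈ Set.uIcc (0:ℝ) θ, HasDerivAt (fun t => θ - t) (-1 : ℝ) x := by
    intro x _
    simpa using ((hasDerivAt_id x).const_sub θ)
  have hv : ∀ x ∈ Set.uIcc (0:ℝ) θ, HasDerivAt v
      (mc n * Real.sin x ^ (2 * n) - mc (n + 1) * Real.sin x ^ (2 * n + 2)) x :=
    fun x _ => hasDeriv_v n x
  have hu' : IntervalIntegrable (fun _ : ℝ => (-1:ℝ)) MeasureTheory.volume 0 θ :=
    intervalIntegrable_const
  have hv' : IntervalIntegrable
      (fun t => mc n * Real.sin t ^ (2 * n) - mc (n + 1) * Real.sin t ^ (2 * n + 2))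
      MeasureTheory.volume 0 θ := by
    apply Continuous.intervalIntegrable; fun_prop
  have hibp := intervalIntegral.integral_mul_deriv_eq_deriv_mul hu hv hu' hv'
  have hv0 : v 0 = 0 := by simp [hv_def]
  have hintv : ∫ t in (0:ℝ)..θ, v t = mA n * Real.sin θ ^ (2 * n + 2) := by
    have := intervalIntegral.integral_eq_sub_of_hasDerivAt
      (f := fun t => mA n * Real.sin t ^ (2 * n + 2)) (f' := v) (a := (0:ℝ)) (b := θ)
      (fun x _ => hasDeriv_F n x)
      (by apply Continuous.intervalIntegrable; fun_prop)
    rw [this]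
    simp
  have hneg : ∫ t in (0:ℝ)..θ, (-1:ℝ) * v t = -(mA n * Real.sin θ ^ (2 * n + 2)) := by
    rw [intervalIntegral.integral_const_mul, hintv]; ring
  rw [hibp, hv0, hneg] at hdiff
  simp at hdiff
  linarith

lemma key_identity (n : ℕ) (θ : ℝ) :
    θ ^ 2 = (∑ k ∈ Finset.range n, mA k * Real.sin θ ^ (2 * k + 2)) + mR n θ := by
  induction n with
  | zero =>
    simp only [Finset.range_zero, Finset.sum_empty, zero_add]
    unfold mR mc
    have hint : ∫ t in (0:ℝ)..θ, (θ - t) * Real.sin t ^ (2 * 0) = θ ^ 2 / 2 := by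
      simp only [mul_zero, pow_zero, mul_one]
      rw [intervalIntegral.integral_sub intervalIntegrable_const
        (Continuous.intervalIntegrable (by fun_prop) _ _)]
      rw [intervalIntegral.integral_const, integral_id]
      simp
      ring
    rw [hint]
    norm_num [Nat.factorial]
    ring
  | succ n ih =>
    rw [Finset.sum_range_succ, ih, mR_step n θ]
    ring

lemma mR_bound (n : ℕ) {θ : ℝ} (h0 : 0 ≤ θ) (h2 : θ ≤ Real.pi / 2) :
    |mR n θ| ≤ mc n * θ ^ 2 * Real.sin θ ^ (2 * n) := by
  have hM : ∀ t ∈ Set.uIoc (0:ℝ) θ,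
      ‖(θ - t) * Real.sin t ^ (2 * n)‖ ≤ θ * Real.sin θ ^ (2 * n) := by
    intro t ht
    rw [Set.uIoc_of_le h0] at ht
    obtain ⟨ht0, htθ⟩ := ht
    have hsin0 : 0 ≤ Real.sin t := by
      apply Real.sin_nonneg_of_nonneg_of_le_pi ht0.le
      linarith [Real.pi_pos]
    have hsinθ : Real.sin t ≤ Real.sin θ := by
      apply Real.sin_le_sin_of_le_of_le_pi_div_two (by linarith) h2 htθ
    rw [norm_mul, norm_pow]
    have h1 : ‖θ - t‖ ≤ θ := by
      rw [Real.norm_eq_abs, abs_of_nonneg (by linarith)]; linarith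
    have h2' : ‖Real.sin t‖ ^ (2 * n) ≤ Real.sin θ ^ (2 * n) := by
      apply pow_le_pow_left₀ (norm_nonneg _)
      rw [Real.norm_eq_abs, abs_of_nonneg hsin0]
      exact hsinθ
    have hsθ : 0 ≤ Real.sin θ := Real.sin_nonneg_of_nonneg_of_le_pi h0 (by linarith [Real.pi_pos])
    exact mul_le_mul h1 h2' (pow_nonneg (norm_nonneg _) _) h0
  have hb := intervalIntegral.norm_integral_le_of_norm_le_const hM
  unfold mR
  rw [abs_mul, abs_of_pos (mc_pos n)]
  have : |∫ t in (0:ℝ)..θ, (θ - t) * Real.sin t ^ (2 * n)| ≤ θ * Real.sin θ ^ (2 * n) * θ := by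
    calc |∫ t in (0:ℝ)..θ, (θ - t) * Real.sin t ^ (2 * n)|
        ≤ θ * Real.sin θ ^ (2 * n) * |θ - 0| := hb
      _ = θ * Real.sin θ ^ (2 * n) * θ := by rw [sub_zero, abs_of_nonneg h0]
  calc mc n * |∫ t in (0:ℝ)..θ, (θ - t) * Real.sin t ^ (2 * n)|
      ≤ mc n * (θ * Real.sin θ ^ (2 * n) * θ) := by
        exact mul_le_mul_of_nonneg_left this (mc_pos n).le
    _ = mc n * θ ^ 2 * Real.sin θ ^ (2 * n) := by ring

lemma mc_le (n : ℕ) : mc n ≤ 2 * (2 * n + 1) := by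
  have hch : (Nat.factorial (2 * n) : ℝ) =
      ((2 * n).choose n : ℝ) * (Nat.factorial n : ℝ) * (Nat.factorial n : ℝ) := by
    have := Nat.choose_mul_factorial_mul_factorial (Nat.le_mul_of_pos_left n (by norm_num) : n ≤ 2 * n)
    rw [show 2 * n - n = n from by omega] at this
    exact_mod_cast this.symm
  have hfour : (4:ℝ) ^ n ≤ (2 * n + 1) * ((2 * n).choose n : ℝ) := by
    exact_mod_cast Nat.four_pow_le_two_mul_add_one_mul_central_binom n
  have hchpos : (0:ℝ) < ((2 * n).choose n : ℝ) := by
    exact_mod_cast Nat.choose_pos (Nat.le_mul_of_pos_left n (by norm_num))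
  have hfp := factR_pos n
  unfold mc
  rw [hch, div_le_iff₀ (by positivity)]
  have := mul_le_mul_of_nonneg_right hfour
    (le_of_lt (by positivity : (0:ℝ) < 4 * (Nat.factorial n : ℝ) ^ 2))
  calc (4:ℝ) ^ (n + 1) * (Nat.factorial n : ℝ) ^ 2
      = 4 ^ n * (4 * (Nat.factorial n : ℝ) ^ 2) := by ring
    _ ≤ (2 * n + 1) * ((2 * n).choose n : ℝ) * (4 * (Nat.factorial n : ℝ) ^ 2) := this
    _ = 2 * (2 * n + 1) * (2 * (((2 * n).choose n : ℝ) * (Nat.factorial n : ℝ) * (Nat.factorial n : ℝ))) := by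
        ring

lemma aux_tendsto {r : ℝ} (hr0 : 0 ≤ r) (hr1 : r < 1) :
    Tendsto (fun n : ℕ => 2 * (2 * (n:ℝ) + 1) * r ^ n) atTop (nhds 0) := by
  have hs : Summable (fun n : ℕ => 2 * (2 * (n:ℝ) + 1) * r ^ n) := by
    have h1 : Summable (fun n : ℕ => (n:ℝ) ^ 1 * r ^ n) :=
      summable_pow_mul_geometric_of_norm_lt_one 1 (by rwa [Real.norm_eq_abs, abs_of_nonneg hr0])
    have h2 : Summable (fun n : ℕ => r ^ n) := summable_geometric_of_lt_one hr0 hr1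
    have := (h1.mul_left 4).add (h2.mul_left 2)
    apply this.congr
    intro n
    simp
    ring
  exact hs.tendsto_atTop_zero

lemma main_hasSum {θ : ℝ} (h0 : 0 ≤ θ) (h2 : θ ≤ Real.pi / 2) (hs1 : Real.sin θ < 1) :
    HasSum (fun n : ℕ => mA n * Real.sin θ ^ (2 * n + 2)) (θ ^ 2) := by
  set s := Real.sin θ with hs_def
  have hs0 : 0 ≤ s := Real.sin_nonneg_of_nonneg_of_le_pi h0 (by linarith [Real.pi_pos])
  have hr0 : 0 ≤ s ^ 2 := sq_nonneg s
  have hr1 : s ^ 2 < 1 := by nlinarith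
  have hbound : ∀ n : ℕ, ‖mA n * s ^ (2 * n + 2)‖ ≤ 2 * (2 * (n:ℝ) + 1) * (s ^ 2) ^ n := by
    intro n
    have hmA : 0 ≤ mA n := (mA_pos n).le
    rw [Real.norm_eq_abs, abs_of_nonneg (by positivity)]
    have h1 : mA n ≤ mc n := by
      rw [mc_eq]
      have hp := mA_pos n
      have hn : (0:ℝ) ≤ (n:ℝ) := Nat.cast_nonneg n
      nlinarith [mul_nonneg hn hn, mul_pos hp hp]
    have h2' : s ^ (2 * n + 2) ≤ (s ^ 2) ^ n := by
      rw [← pow_mul]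
      apply pow_le_pow_of_le_one hs0 hs1.le
      omega
    have h3 : mc n ≤ 2 * (2 * (n:ℝ) + 1) := mc_le n
    calc mA n * s ^ (2 * n + 2) ≤ mc n * (s ^ 2) ^ n := by
          apply mul_le_mul h1 h2' (by positivity) (mc_pos n).le
      _ ≤ 2 * (2 * (n:ℝ) + 1) * (s ^ 2) ^ n := by
          apply mul_le_mul_of_nonneg_right h3 (by positivity)
  have hsummable : Summable (fun n : ℕ => mA n * s ^ (2 * n + 2)) := by
    apply Summable.of_norm
    apply Summable.of_nonneg_of_le (fun n => norm_nonneg _) hbound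
    have h1 : Summable (fun n : ℕ => (n:ℝ) ^ 1 * (s^2) ^ n) :=
      summable_pow_mul_geometric_of_norm_lt_one 1 (by rwa [Real.norm_eq_abs, abs_of_nonneg hr0])
    have h2 : Summable (fun n : ℕ => (s^2) ^ n) := summable_geometric_of_lt_one hr0 hr1
    have := (h1.mul_left 4).add (h2.mul_left 2)
    apply this.congr
    intro n
    simp
    ring
  have hL := hsummable.hasSum
  have htend1 := hL.tendsto_sum_nat
  have htend2 : Tendsto (fun n => ∑ k ∈ Finset.range n, mA k * s ^ (2 * k + 2))
      atTop (nhds (θ ^ 2)) := by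
    have heq : ∀ n, ∑ k ∈ Finset.range n, mA k * s ^ (2 * k + 2) = θ ^ 2 - mR n θ := by
      intro n
      have := key_identity n θ
      rw [hs_def]
      linarith
    simp only [heq]
    have hRlim : Tendsto (fun n => mR n θ) atTop (nhds 0) := by
      have hgt : Tendsto (fun n : ℕ => 2 * (2 * (n:ℝ) + 1) * (s ^ 2) ^ n * θ ^ 2)
          atTop (nhds 0) := by
        have := (aux_tendsto hr0 hr1).mul_const (θ ^ 2)
        rwa [zero_mul] at this
      apply squeeze_zero_norm ?_ hgt
      intro n
      calc ‖mR n θ‖ ≤ mc n * θ ^ 2 * s ^ (2 * n) := mR_bound n h0 h2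
        _ = mc n * (s ^ 2) ^ n * θ ^ 2 := by rw [← pow_mul]; ring
        _ ≤ 2 * (2 * (n:ℝ) + 1) * (s ^ 2) ^ n * θ ^ 2 := by
            have := mc_le n
            have h4 : (0:ℝ) ≤ (s ^ 2) ^ n := by positivity
            nlinarith [sq_nonneg θ, mul_le_mul_of_nonneg_right this h4]
    have := tendsto_const_nhds (x := θ ^ 2) (f := atTop (α := ℕ)) |>.sub hRlim
    simpa using this
  have : ∑' n : ℕ, mA n * s ^ (2 * n + 2) = θ ^ 2 := tendsto_nhds_unique htend1 htend2
  rwa [this] at hL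

theorem modified_equation_series (h : ℝ) (h0 : 0 < h) (h2 : h < 2) :
    ((2 / h) * Real.arcsin (h / 2)) ^ 2 =
      ∑' k : ℕ+, (2 * (Nat.factorial ((k : ℕ) - 1) : ℝ) ^ 2 /
        (Nat.factorial (2 * (k : ℕ)) : ℝ)) * h ^ (2 * (k : ℕ) - 2) ∧
    ∀ (k : ℕ+) (x : ℝ),
      -((Nat.factorial ((k : ℕ) - 1) : ℝ) ^ 2 /
          ((k : ℝ) * (Nat.factorial (2 * (k : ℕ) - 1) : ℝ))) * x =
      -(2 * (Nat.factorial ((k : ℕ) - 1) : ℝ) ^ 2 /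
          (Nat.factorial (2 * (k : ℕ)) : ℝ)) * x := by
  have hne : h ≠ 0 := ne_of_gt h0
  constructor
  · set θ := Real.arcsin (h / 2) with hθdef
    have hsin : Real.sin θ = h / 2 := Real.sin_arcsin (by linarith) (by linarith)
    have hθ0 : 0 ≤ θ := Real.arcsin_nonneg.2 (by linarith)
    have hθ2 : θ ≤ Real.pi / 2 := Real.arcsin_le_pi_div_two _
    have hs1 : Real.sin θ < 1 := by rw [hsin]; linarith
    have hsum2 := (main_hasSum hθ0 hθ2 hs1).mul_left (4 / h ^ 2)
    have heq : (fun k : ℕ+ => (2 * (Nat.factorial ((k : ℕ) - 1) : ℝ) ^ 2 /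
          (Nat.factorial (2 * (k : ℕ)) : ℝ)) * h ^ (2 * (k : ℕ) - 2)) =
        (fun n : ℕ => 4 / h ^ 2 * (mA n * Real.sin θ ^ (2 * n + 2))) ∘ Equiv.pnatEquivNat := by
      funext k
      have hk1 : 1 ≤ (k : ℕ) := k.one_le
      obtain ⟨m, hm⟩ : ∃ m : ℕ, (k : ℕ) = m + 1 := ⟨(k : ℕ) - 1, by omega⟩
      simp only [Function.comp_apply, Equiv.pnatEquivNat_apply, PNat.natPred, hm]
      rw [hsin]
      simp only [Nat.add_sub_cancel]
      unfold mA
      rw [show 2 * m + 2 = 2 * (m + 1) from by ring]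
      have hfp : (0:ℝ) < (Nat.factorial (2 * (m + 1)) : ℝ) := factR_pos _
      have hpow : h ^ (2 * (m + 1)) = h ^ (2 * (m + 1) - 2) * h ^ 2 := by
        rw [← pow_add]
        congr 1
      have hdivpow : (h / 2) ^ (2 * (m + 1)) = h ^ (2 * (m + 1)) / 4 ^ (m + 1) := by
        rw [div_pow]
        congr 1
        rw [show (4:ℝ) = 2 ^ 2 from by norm_num, ← pow_mul, mul_comm 2 (m+1)]
      rw [hdivpow, hpow]
      have h4 : (0:ℝ) < 4 ^ (m + 1) := by positivity
      field_simp
      ring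
    have hsum3 : HasSum (fun k : ℕ+ => (2 * (Nat.factorial ((k : ℕ) - 1) : ℝ) ^ 2 /
          (Nat.factorial (2 * (k : ℕ)) : ℝ)) * h ^ (2 * (k : ℕ) - 2)) (4 / h ^ 2 * θ ^ 2) := by
      rw [heq]
      exact (Equiv.pnatEquivNat.hasSum_iff).2 hsum2
    rw [hsum3.tsum_eq]
    field_simp
    ring
  · intro k x
    have hk1 : 1 ≤ (k : ℕ) := k.one_le
    set m : ℕ := (k : ℕ) with hmdef
    obtain ⟨j, hj⟩ : ∃ j : ℕ, 2 * m = j + 1 := ⟨2 * m - 1, by omega⟩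
    have hj' : 2 * m - 1 = j := by omega
    rw [hj]
    simp only [Nat.add_sub_cancel]
    rw [Nat.factorial_succ]
    have hfj : (0:ℝ) < (Nat.factorial j : ℝ) := factR_pos j
    have hm0 : (0:ℝ) < (m : ℝ) := by exact_mod_cast Nat.lt_of_lt_of_le Nat.zero_lt_one hk1
    have hcast : ((j : ℝ) + 1) = 2 * (m : ℝ) := by
      have : ((j + 1 : ℕ) : ℝ) = ((2 * m : ℕ) : ℝ) := by rw [← hj]
      push_cast at this
      linarith
    have hkm : ((k : ℕ) : ℝ) = (m : ℝ) := by rw [hmdef]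
    rw [hkm]
    push_cast
    rw [hcast]
    field_simp
end

section
/- For positive integers k and l with l ≤ k, define r_{k,l} = l!/(k²(k+1)(k+2)⋯(k+l)). Then 1/k² = ∑_{l=1}^{k} (l-1)!/(k(k+1)⋯(k+l)) + r_{k,k}. -/
lemma aux_prod_pos (k : ℕ) (hk : 0 < k) (n : ℕ) :
    0 < ∏ m ∈ Finset.Icc 1 n, ((k : ℝ) + m) := by
  apply Finset.prod_pos
  intro m hm
  positivity

lemma aux_range_prod (k : ℕ) (l : ℕ) :
    ∏ m ∈ Finset.range (l + 1), ((k : ℝ) + m) =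
      (k : ℝ) * ∏ m ∈ Finset.Icc 1 l, ((k : ℝ) + m) := by
  induction l with
  | zero => simp
  | succ n ih =>
    rw [Finset.prod_range_succ, ih, Finset.prod_Icc_succ_top (Nat.le_add_left 1 n)]
    push_cast
    ring

lemma aux_main (k : ℕ) (hk : 0 < k) (n : ℕ) :
    (1 : ℝ) / (k : ℝ) ^ 2 =
      (∑ l ∈ Finset.Icc 1 n,
        (Nat.factorial (l - 1) : ℝ) / ∏ m ∈ Finset.range (l + 1), ((k : ℝ) + m)) +
      (Nat.factorial n : ℝ) / ((k : ℝ) ^ 2 * ∏ m ∈ Finset.Icc 1 n, ((k : ℝ) + m)) := by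
  induction n with
  | zero => simp
  | succ n ih =>
    rw [Finset.sum_Icc_succ_top (Nat.le_add_left 1 n), ih]
    have hP := aux_prod_pos k hk n
    have hk' : (0:ℝ) < k := by exact_mod_cast hk
    rw [show n + 1 - 1 = n from rfl, aux_range_prod]
    rw [Finset.prod_Icc_succ_top (Nat.le_add_left 1 n)]
    rw [Nat.factorial_succ]
    push_cast
    field_simp
    ring

theorem inv_sq_expansion (k : ℕ) (hk : 0 < k) :
    (1 : ℝ) / (k : ℝ) ^ 2 =
      (∑ l ∈ Finset.Icc 1 k,
        (Nat.factorial (l - 1) : ℝ) / ∏ m ∈ Finset.range (l + 1), ((k : ℝ) + m)) +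
      (Nat.factorial k : ℝ) / ((k : ℝ) ^ 2 * ∏ m ∈ Finset.Icc 1 k, ((k : ℝ) + m)) := by
  exact aux_main k hk k
end
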